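/- (Corollary: polynomial-in-rounds generalization error bound.) Let ν be a probability measure on ℝ^{d_0} such that ν-almost every x satisfies x_i ∈ [0, 1] for every coordinate i, let q and p_1, …, p_N be conditional label distributions over ν, and let n_1, …, n_N > 0 with n = ∑_{k=1}^{N} n_k. Let θ : ℕ → (parameters of an L-layer ReLU network with C output nodes) be a parameter trajectory (θ(t) the global-model parameters after communication round t), and suppose there exist a constant C_0 ≥ 0 and a number of local epochs E ∈ ℕ such that ‖f(·; θ(t))‖_pnp ≤ C_0 · t^{E·L} for all t ≥ 1. Then for every communication round t ≥ 1, | ∑_{k=1}^{N} (n_k/n) L(f(·; θ(t)), p_k) − L(f(·; θ(t)), q) | ≤ C_0 · t^{E·L} · ∑_{k=1}^{N} (n_k/n) ∫ ∑_{i=1}^{C} | p_k x i − q x i | dν(x). -/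
import Mathlib


open MeasureTheory Real Finset

/-- Pre-activations of a ReLU network with layer widths `d` and parameters `θ`
(`θ l i j` is the weight of the edge from node `i` of layer `l` to node `j` of
layer `l+1`) on input `x`.  `preact d θ x l` is the pre-activation vector
`a_{l+1}` of layer `l+1` (paper indexing): `a_1 j = ∑ i, θ 0 i j * x i` and
`a_{l+2} j = ∑ i, θ (l+1) i j * σ (a_{l+1} i)` where `σ t = max 0 t` is ReLU.
For an `L`-layer network (`L ≥ 1`) the `k`-th output is
`f_k(x; θ) = ∑ i, θ L i k * σ (a_L i) = preact d θ x L k`. -/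
noncomputable def preact (d : ℕ → ℕ) (θ : ∀ l : ℕ, Fin (d l) → Fin (d (l + 1)) → ℝ)
    (x : Fin (d 0) → ℝ) : (l : ℕ) → Fin (d (l + 1)) → ℝ
  | 0 => fun j => ∑ i, θ 0 i j * x i
  | (l + 1) => fun j => ∑ i, θ (l + 1) i j * max 0 (preact d θ x l i)

/-- The path-norm proxy of an `L`-layer ReLU network:
`‖f(·; θ)‖_pnp = ∑_{(i_0, …, i_{L+1})} ∏_{l=0}^{L} |θ_l(i_l, i_{l+1})|`,
the sum ranging over all paths through the network. -/
noncomputable def pathNormProxy (L : ℕ) (d : ℕ → ℕ)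
    (θ : ∀ l : ℕ, Fin (d l) → Fin (d (l + 1)) → ℝ) : ℝ :=
  ∑ i : (l : Fin (L + 2)) → Fin (d l), ∏ l : Fin (L + 1), |θ l (i l.castSucc) (i l.succ)|

/-- The cross-entropy loss of classifier `f` at point `(x, i)`:
`ℓ_f(x, i) = log (∑ r, exp (f x r)) − f x i`. -/
noncomputable def crossEntropyLoss {𝒳 : Type*} {C : ℕ} (f : 𝒳 → Fin C → ℝ)
    (x : 𝒳) (i : Fin C) : ℝ :=
  Real.log (∑ r, Real.exp (f x r)) - f x i

/-- The risk of classifier `f` under feature distribution `ν` and conditional label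
distribution `p`: `L(f, p) = ∫ ∑ i, p x i · ℓ_f(x, i) dν(x)`. -/
noncomputable def risk {𝒳 : Type*} [MeasurableSpace 𝒳] {C : ℕ} (ν : Measure 𝒳)
    (f : 𝒳 → Fin C → ℝ) (p : 𝒳 → Fin C → ℝ) : ℝ :=
  ∫ x, ∑ i, p x i * crossEntropyLoss f x i ∂ν

noncomputable def Abnd (d : ℕ → ℕ) (θ : ∀ l : ℕ, Fin (d l) → Fin (d (l + 1)) → ℝ) :
    (l : ℕ) → Fin (d (l + 1)) → ℝ
  | 0 => fun j => ∑ i, |θ 0 i j|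
  | (l + 1) => fun j => ∑ i, |θ (l + 1) i j| * Abnd d θ l i

lemma Abnd_nonneg (d : ℕ → ℕ) (θ : ∀ l : ℕ, Fin (d l) → Fin (d (l + 1)) → ℝ) :
    ∀ l j, 0 ≤ Abnd d θ l j := by
  intro l
  induction l with
  | zero => exact fun j => Finset.sum_nonneg fun i _ => abs_nonneg _
  | succ l ih =>
    exact fun j => Finset.sum_nonneg fun i _ => mul_nonneg (abs_nonneg _) (ih i)

lemma abs_preact_le_Abnd (d : ℕ → ℕ) (θ : ∀ l : ℕ, Fin (d l) → Fin (d (l + 1)) → ℝ)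
    (x : Fin (d 0) → ℝ) (hx : ∀ i, |x i| ≤ 1) :
    ∀ l j, |preact d θ x l j| ≤ Abnd d θ l j := by
  intro l
  induction l with
  | zero =>
    intro j
    calc |∑ i, θ 0 i j * x i| ≤ ∑ i, |θ 0 i j * x i| := Finset.abs_sum_le_sum_abs _ _
      _ ≤ ∑ i, |θ 0 i j| := Finset.sum_le_sum fun i _ => by
            rw [abs_mul]
            exact mul_le_of_le_one_right (abs_nonneg _) (hx i)
      _ = Abnd d θ 0 j := rfl
  | succ l ih =>
    intro j
    calc |∑ i, θ (l + 1) i j * max 0 (preact d θ x l i)|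
        ≤ ∑ i, |θ (l + 1) i j * max 0 (preact d θ x l i)| := Finset.abs_sum_le_sum_abs _ _
      _ ≤ ∑ i, |θ (l + 1) i j| * Abnd d θ l i := Finset.sum_le_sum fun i _ => by
            rw [abs_mul]
            refine mul_le_mul_of_nonneg_left ?_ (abs_nonneg _)
            rw [abs_of_nonneg (le_max_left _ _)]
            exact max_le (Abnd_nonneg d θ l i) (le_trans (le_abs_self _) (ih i))
      _ = Abnd d θ (l + 1) j := rfl

lemma sum_pi_snoc' (m : ℕ) (d : ℕ → ℕ) (f : (∀ i : Fin (m + 1), Fin (d i)) → ℝ) :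
    ∑ G : ∀ i : Fin (m + 1), Fin (d i), f G
      = ∑ a : Fin (d m), ∑ g : ∀ i : Fin m, Fin (d i),
          f (Fin.snoc (α := fun i : Fin (m + 1) => Fin (d i)) g a) := by
  calc ∑ G : ∀ i : Fin (m + 1), Fin (d i), f G
      = ∑ p : Fin (d m) × (∀ i : Fin m, Fin (d i)),
          f (Fin.snoc (α := fun i : Fin (m + 1) => Fin (d i)) p.2 p.1) :=
        (Fintype.sum_bijective (fun p : Fin (d m) × (∀ i : Fin m, Fin (d i)) =>
            Fin.snoc (α := fun i : Fin (m + 1) => Fin (d i)) p.2 p.1)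
          ((Fin.snocEquiv (fun i : Fin (m + 1) => Fin (d i))).bijective)
          _ f (fun p => rfl)).symm
    _ = _ := Fintype.sum_prod_type (f := fun p : Fin (d m) × (∀ i : Fin m, Fin (d i)) =>
          f (Fin.snoc (α := fun i : Fin (m + 1) => Fin (d i)) p.2 p.1))

lemma snoc_succ_eq {m : ℕ} {α : Fin (m + 2) → Sort*}
    (g : ∀ i : Fin (m + 1), α i.castSucc) (a : α (Fin.last (m + 1))) (l : Fin m) :
    Fin.snoc g a l.castSucc.succ = g l.succ :=
  Fin.snoc_castSucc (α := α) (p := g) (x := a) (i := l.succ)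

lemma snoc_last_succ {m : ℕ} {α : Fin (m + 2) → Sort*}
    (g : ∀ i : Fin (m + 1), α i.castSucc) (a : α (Fin.last (m + 1))) :
    Fin.snoc g a (Fin.last m).succ = a :=
  Fin.snoc_last (α := α) (p := g) (x := a)

lemma Abnd_eq (d : ℕ → ℕ) (θ : ∀ l : ℕ, Fin (d l) → Fin (d (l + 1)) → ℝ) :
    ∀ (m : ℕ) (j : Fin (d (m + 1))),
      Abnd d θ m j = ∑ g : ∀ l : Fin (m + 1), Fin (d l),
        (∏ l : Fin m, |θ l (g l.castSucc) (g l.succ)|) * |θ m (g (Fin.last m)) j| := by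
  intro m
  induction m with
  | zero =>
    intro j
    rw [sum_pi_snoc' 0 d]
    show Abnd d θ 0 j = ∑ a : Fin (d 0), _
    rw [show Abnd d θ 0 j = ∑ a : Fin (d 0), |θ 0 a j| from rfl]
    refine Finset.sum_congr rfl fun a _ => ?_
    rw [Fintype.sum_unique, Fin.prod_univ_zero, one_mul, Fin.snoc_last]
  | succ m ih =>
    intro j
    rw [sum_pi_snoc' (m + 1) d]
    rw [show Abnd d θ (m + 1) j = ∑ a : Fin (d (m + 1)), |θ (m + 1) a j| * Abnd d θ m a
      from rfl]
    refine Finset.sum_congr rfl fun a _ => ?_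
    rw [ih a, Finset.mul_sum]
    refine Finset.sum_congr rfl fun g _ => ?_
    rw [Fin.prod_univ_castSucc]
    rw [Fin.snoc_last, Fin.snoc_castSucc, snoc_last_succ]
    have hP : (∏ l : Fin m,
        |θ l.castSucc ((Fin.snoc (α := fun i : Fin (m + 2) => Fin (d i)) g a) l.castSucc.castSucc)
          ((Fin.snoc (α := fun i : Fin (m + 2) => Fin (d i)) g a) l.castSucc.succ)|)
        = ∏ l : Fin m, |θ l (g l.castSucc) (g l.succ)| := by
      refine Finset.prod_congr rfl fun l _ => ?_
      rw [Fin.snoc_castSucc, snoc_succ_eq]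
      rfl
    rw [hP]
    rw [show |θ (↑(Fin.last m)) (g (Fin.last m)) a| = |θ m (g (Fin.last m)) a| from rfl]
    ring

lemma sum_Abnd (L : ℕ) (d : ℕ → ℕ) (θ : ∀ l : ℕ, Fin (d l) → Fin (d (l + 1)) → ℝ) :
    ∑ j, Abnd d θ L j = pathNormProxy L d θ := by
  rw [pathNormProxy, sum_pi_snoc' (L + 1) d]
  refine Finset.sum_congr rfl fun a _ => ?_
  rw [Abnd_eq]
  refine Finset.sum_congr rfl fun g _ => ?_
  rw [Fin.prod_univ_castSucc, Fin.snoc_castSucc, snoc_last_succ]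
  congr 1
  · refine Finset.prod_congr rfl fun l _ => ?_
    rw [Fin.snoc_castSucc, snoc_succ_eq]
    rfl

lemma abs_preact_le_pnp (L : ℕ) (d : ℕ → ℕ) (θ : ∀ l : ℕ, Fin (d l) → Fin (d (l + 1)) → ℝ)
    (x : Fin (d 0) → ℝ) (hx : ∀ i, |x i| ≤ 1) (k : Fin (d (L + 1))) :
    |preact d θ x L k| ≤ pathNormProxy L d θ := by
  refine le_trans (abs_preact_le_Abnd d θ x hx L k) ?_
  rw [← sum_Abnd L d θ]
  exact Finset.single_le_sum (fun i _ => Abnd_nonneg d θ L i) (Finset.mem_univ k)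

lemma measurable_preact (d : ℕ → ℕ) (θ : ∀ l : ℕ, Fin (d l) → Fin (d (l + 1)) → ℝ) :
    ∀ l j, Measurable (fun x : Fin (d 0) → ℝ => preact d θ x l j) := by
  intro l
  induction l with
  | zero =>
    intro j
    exact Finset.measurable_sum _ fun i _ => (measurable_pi_apply i).const_mul _
  | succ l ih =>
    intro j
    exact Finset.measurable_sum _ fun i _ => (measurable_const.max (ih i)).const_mul _

lemma risk_diff_le {𝒳 : Type*} [MeasurableSpace 𝒳] {C : ℕ} (hC : 0 < C)
    (ν : Measure 𝒳) [IsProbabilityMeasure ν]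
    (f : 𝒳 → Fin C → ℝ) (hfm : ∀ i, Measurable fun x => f x i)
    (B : ℝ) (hB : 0 ≤ B) (hfb : ∀ᵐ x ∂ν, ∀ i, |f x i| ≤ B)
    (p q : 𝒳 → Fin C → ℝ)
    (hpm : Measurable p) (hqm : Measurable q)
    (hp0 : ∀ x i, 0 ≤ p x i) (hq0 : ∀ x i, 0 ≤ q x i)
    (hp1 : ∀ᵐ x ∂ν, ∑ i, p x i = 1) (hq1 : ∀ᵐ x ∂ν, ∑ i, q x i = 1) :
    |risk ν f p - risk ν f q| ≤ B * ∫ x, ∑ i, |p x i - q x i| ∂ν := by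
  have hCA : (1 : ℝ) ≤ (C : ℝ) := Nat.one_le_cast.mpr hC
  have hCpos : (0 : ℝ) < (C : ℝ) := by linarith
  set M : ℝ := Real.log C + 2 * B with hM
  have hfm' : Measurable fun x => Real.log (∑ r, Real.exp (f x r)) :=
    (Finset.measurable_sum _ fun r _ => (hfm r).exp).log
  have hl : ∀ i, Measurable fun x => crossEntropyLoss f x i := fun i => hfm'.sub (hfm i)
  have hpim : ∀ i, Measurable fun x => p x i := fun i => (measurable_pi_apply i).comp hpm
  have hqim : ∀ i, Measurable fun x => q x i := fun i => (measurable_pi_apply i).comp hqm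
  have hlogC : 0 ≤ Real.log C := Real.log_nonneg hCA
  -- a.e. bound on the loss
  have hlb : ∀ᵐ x ∂ν, ∀ i, |crossEntropyLoss f x i| ≤ M := by
    filter_upwards [hfb] with x hx i
    set S := ∑ r, Real.exp (f x r) with hS
    have hS1 : S ≤ (C : ℝ) * Real.exp B := by
      calc S ≤ ∑ _r : Fin C, Real.exp B :=
            Finset.sum_le_sum fun r _ =>
              Real.exp_le_exp.mpr (le_trans (le_abs_self _) (hx r))
        _ = (C : ℝ) * Real.exp B := by
            rw [Finset.sum_const, Finset.card_univ, Fintype.card_fin, nsmul_eq_mul]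
    have i0 : Fin C := ⟨0, hC⟩
    have hS2 : Real.exp (-B) ≤ S := by
      refine le_trans (Real.exp_le_exp.mpr ?_)
        (Finset.single_le_sum (fun r _ => (Real.exp_pos (f x r)).le) (Finset.mem_univ i0))
      have := (abs_le.mp (hx i0)).1
      linarith
    have hSpos : 0 < S := lt_of_lt_of_le (Real.exp_pos _) hS2
    have hlog1 : Real.log S ≤ Real.log C + B := by
      calc Real.log S ≤ Real.log ((C : ℝ) * Real.exp B) := by
            apply Real.log_le_log hSpos hS1
        _ = Real.log C + B := by
            rw [Real.log_mul (ne_of_gt hCpos) (Real.exp_ne_zero _), Real.log_exp]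
    have hlog2 : -B ≤ Real.log S := by
      have h := Real.log_le_log (Real.exp_pos (-B)) hS2
      rwa [Real.log_exp] at h
    have habslog : |Real.log S| ≤ Real.log C + B := abs_le.mpr ⟨by linarith, by linarith⟩
    have h1 : |crossEntropyLoss f x i| ≤ |Real.log S| + |f x i| := by
      rw [crossEntropyLoss, sub_eq_add_neg]
      exact le_trans (abs_add_le _ _) (by rw [abs_neg])
    have := hx i
    rw [hM]
    linarith
  -- a.e. bounds on p, q
  have hp01 : ∀ᵐ x ∂ν, ∀ i, p x i ≤ 1 := by
    filter_upwards [hp1] with x hx i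
    rw [← hx]
    exact Finset.single_le_sum (fun r _ => hp0 x r) (Finset.mem_univ i)
  have hq01 : ∀ᵐ x ∂ν, ∀ i, q x i ≤ 1 := by
    filter_upwards [hq1] with x hx i
    rw [← hx]
    exact Finset.single_le_sum (fun r _ => hq0 x r) (Finset.mem_univ i)
  -- integrability
  have hgpm : Measurable fun x => ∑ i, p x i * crossEntropyLoss f x i :=
    Finset.measurable_sum _ fun i _ => (hpim i).mul (hl i)
  have hgqm : Measurable fun x => ∑ i, q x i * crossEntropyLoss f x i :=
    Finset.measurable_sum _ fun i _ => (hqim i).mul (hl i)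
  have key_int : ∀ (u : 𝒳 → Fin C → ℝ), (∀ x i, 0 ≤ u x i) →
      (∀ᵐ x ∂ν, ∀ i, u x i ≤ 1) →
      Measurable (fun x => ∑ i, u x i * crossEntropyLoss f x i) →
      Integrable (fun x => ∑ i, u x i * crossEntropyLoss f x i) ν := by
    intro u hu0 hu1 hum
    refine (integrable_const ((C : ℝ) * M)).mono' hum.aestronglyMeasurable ?_
    filter_upwards [hlb, hu1] with x h1 h2
    rw [Real.norm_eq_abs]
    calc |∑ i, u x i * crossEntropyLoss f x i|
        ≤ ∑ i, |u x i * crossEntropyLoss f x i| := Finset.abs_sum_le_sum_abs _ _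
      _ ≤ ∑ _i : Fin C, 1 * M := Finset.sum_le_sum fun i _ => by
          rw [abs_mul]
          refine mul_le_mul ?_ (h1 i) (abs_nonneg _) zero_le_one
          rw [abs_of_nonneg (hu0 x i)]
          exact h2 i
      _ = (C : ℝ) * M := by
          rw [one_mul, Finset.sum_const, Finset.card_univ, Fintype.card_fin, nsmul_eq_mul]
  have hgp := key_int p hp0 hp01 hgpm
  have hgq := key_int q hq0 hq01 hgqm
  -- the difference integrand is integrable (for `integral_mono_ae`)
  have hdm : Measurable fun x => ∑ i, |p x i - q x i| :=
    Finset.measurable_sum _ fun i _ => ((hpim i).sub (hqim i)).abs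
  have hdint : Integrable (fun x => ∑ i, |p x i - q x i|) ν := by
    refine (integrable_const ((C : ℝ) * 2)).mono' hdm.aestronglyMeasurable ?_
    filter_upwards [hp01, hq01] with x h1 h2
    rw [Real.norm_eq_abs, abs_of_nonneg (Finset.sum_nonneg fun i _ => abs_nonneg _)]
    calc ∑ i, |p x i - q x i| ≤ ∑ _i : Fin C, (2 : ℝ) := Finset.sum_le_sum fun i _ => by
          have h3 := abs_of_nonneg (hp0 x i)
          have h4 := abs_of_nonneg (hq0 x i)
          have h5 := h1 i
          have h6 := h2 i
          calc |p x i - q x i| ≤ |p x i| + |q x i| := by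
                rw [sub_eq_add_neg]
                exact le_trans (abs_add_le _ _) (by rw [abs_neg])
            _ ≤ 2 := by rw [h3, h4]; linarith
      _ = (C : ℝ) * 2 := by
          rw [Finset.sum_const, Finset.card_univ, Fintype.card_fin, nsmul_eq_mul]
  -- a.e. bound on the difference
  have hdiff : ∀ᵐ x ∂ν,
      |(∑ i, p x i * crossEntropyLoss f x i) - ∑ i, q x i * crossEntropyLoss f x i|
        ≤ B * ∑ i, |p x i - q x i| := by
    filter_upwards [hp1, hq1, hfb] with x h1 h2 h3
    have expand : (∑ i, p x i * crossEntropyLoss f x i)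
          - ∑ i, q x i * crossEntropyLoss f x i
        = ((∑ i, p x i) - ∑ i, q x i) * Real.log (∑ r, Real.exp (f x r))
          - ∑ i, (p x i - q x i) * f x i := by
      simp only [crossEntropyLoss, mul_sub, sub_mul, Finset.sum_sub_distrib, Finset.sum_mul]
      ring
    rw [expand, h1, h2, sub_self, zero_mul, zero_sub, abs_neg]
    calc |∑ i, (p x i - q x i) * f x i|
        ≤ ∑ i, |(p x i - q x i) * f x i| := Finset.abs_sum_le_sum_abs _ _
      _ ≤ ∑ i, |p x i - q x i| * B := Finset.sum_le_sum fun i _ => by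
          rw [abs_mul]
          exact mul_le_mul_of_nonneg_left (h3 i) (abs_nonneg _)
      _ = B * ∑ i, |p x i - q x i| := by rw [← Finset.sum_mul, mul_comm]
  -- conclude
  rw [risk, risk, ← integral_sub hgp hgq]
  calc |∫ x, ((∑ i, p x i * crossEntropyLoss f x i)
          - ∑ i, q x i * crossEntropyLoss f x i) ∂ν|
      ≤ ∫ x, |(∑ i, p x i * crossEntropyLoss f x i)
          - ∑ i, q x i * crossEntropyLoss f x i| ∂ν := by
        have h := norm_integral_le_integral_norm (μ := ν)
          (fun x => (∑ i, p x i * crossEntropyLoss f x i)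
            - ∑ i, q x i * crossEntropyLoss f x i)
        simpa [Real.norm_eq_abs] using h
    _ ≤ ∫ x, B * ∑ i, |p x i - q x i| ∂ν :=
        integral_mono_ae (hgp.sub hgq).abs (hdint.const_mul B) hdiff
    _ = B * ∫ x, ∑ i, |p x i - q x i| ∂ν := integral_const_mul B _


/-- **Corollary (polynomial-in-rounds generalization error bound).**
`θ t` are the global ReLU-network parameters after communication round `t`.  If the
path-norm proxy grows at most polynomially, `‖f(·; θ(t))‖_pnp ≤ C₀ · t^{E·L}` for all
`t ≥ 1` (`E` the number of local epochs, `L` the number of layers), then for every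
round `t ≥ 1` the generalization error of the global model is bounded by
`C₀ · t^{E·L}` times the weighted total label-noise term. -/
theorem generalization_error_bound_poly_rounds
    (L : ℕ) (hL : 1 ≤ L) (d : ℕ → ℕ) (hC : 1 ≤ d (L + 1))
    (θ : ℕ → ∀ l : ℕ, Fin (d l) → Fin (d (l + 1)) → ℝ)
    (ν : Measure (Fin (d 0) → ℝ)) [IsProbabilityMeasure ν]
    (hν : ∀ᵐ x ∂ν, ∀ i, x i ∈ Set.Icc (0 : ℝ) 1)
    (N : ℕ) (hN : 1 ≤ N)
    (p : Fin N → (Fin (d 0) → ℝ) → Fin (d (L + 1)) → ℝ)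
    (q : (Fin (d 0) → ℝ) → Fin (d (L + 1)) → ℝ)
    (hpm : ∀ k, Measurable (p k)) (hqm : Measurable q)
    (hp0 : ∀ k x i, 0 ≤ p k x i) (hq0 : ∀ x i, 0 ≤ q x i)
    (hp1 : ∀ k, ∀ᵐ x ∂ν, ∑ i, p k x i = 1) (hq1 : ∀ᵐ x ∂ν, ∑ i, q x i = 1)
    (n : Fin N → ℕ) (hn : ∀ k, 0 < n k)
    (C₀ : ℝ) (hC₀ : 0 ≤ C₀) (E : ℕ)
    (hpoly : ∀ t : ℕ, 1 ≤ t → pathNormProxy L d (θ t) ≤ C₀ * (t : ℝ) ^ (E * L)) :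
    ∀ t : ℕ, 1 ≤ t →
      |∑ k, ((n k : ℝ) / (∑ j, (n j : ℝ))) * risk ν (fun x => preact d (θ t) x L) (p k)
          - risk ν (fun x => preact d (θ t) x L) q|
        ≤ C₀ * (t : ℝ) ^ (E * L) * ∑ k, ((n k : ℝ) / (∑ j, (n j : ℝ))) *
            ∫ x, ∑ i, |p k x i - q x i| ∂ν := by
  intro t ht
  set B : ℝ := C₀ * (t : ℝ) ^ (E * L) with hBdef
  have hB : 0 ≤ B := mul_nonneg hC₀ (pow_nonneg (Nat.cast_nonneg t) _)
  set f : (Fin (d 0) → ℝ) → Fin (d (L + 1)) → ℝ := fun x => preact d (θ t) x L with hfdef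
  have hfm : ∀ i, Measurable fun x => f x i := fun i => measurable_preact d (θ t) L i
  have hfb : ∀ᵐ x ∂ν, ∀ i, |f x i| ≤ B := by
    filter_upwards [hν] with x hx i
    have hx1 : ∀ j, |x j| ≤ 1 := fun j => abs_le.mpr ⟨by linarith [(hx j).1], (hx j).2⟩
    exact le_trans (abs_preact_le_pnp L d (θ t) x hx1 i) (hpoly t ht)
  have hkey : ∀ k, |risk ν f (p k) - risk ν f q|
      ≤ B * ∫ x, ∑ i, |p k x i - q x i| ∂ν := fun k =>
    risk_diff_le hC ν f hfm B hB hfb (p k) q (hpm k) hqm (hp0 k) hq0 (hp1 k) hq1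
  set S : ℝ := ∑ j, (n j : ℝ) with hSdef
  have hSpos : 0 < S := by
    have : Nonempty (Fin N) := Fin.pos_iff_nonempty.mp hN
    exact Finset.sum_pos (fun j _ => Nat.cast_pos.mpr (hn j)) Finset.univ_nonempty
  set w : Fin N → ℝ := fun k => (n k : ℝ) / S with hwdef
  have hw0 : ∀ k, 0 ≤ w k := fun k => div_nonneg (Nat.cast_nonneg _) hSpos.le
  have hw1 : ∑ k, w k = 1 := by
    rw [hwdef, ← Finset.sum_div, ← hSdef, div_self (ne_of_gt hSpos)]
  have hsplit : ∑ k, w k * risk ν f (p k) - risk ν f q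
      = ∑ k, w k * (risk ν f (p k) - risk ν f q) := by
    simp only [mul_sub]
    rw [Finset.sum_sub_distrib, ← Finset.sum_mul, hw1, one_mul]
  rw [hsplit]
  calc |∑ k, w k * (risk ν f (p k) - risk ν f q)|
      ≤ ∑ k, |w k * (risk ν f (p k) - risk ν f q)| := Finset.abs_sum_le_sum_abs _ _
    _ ≤ ∑ k, w k * (B * ∫ x, ∑ i, |p k x i - q x i| ∂ν) := Finset.sum_le_sum fun k _ => by
        rw [abs_mul, abs_of_nonneg (hw0 k)]
        exact mul_le_mul_of_nonneg_left (hkey k) (hw0 k)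
    _ = B * ∑ k, w k * ∫ x, ∑ i, |p k x i - q x i| ∂ν := by
        rw [Finset.mul_sum]
        exact Finset.sum_congr rfl fun k _ => by ring
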